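/- For every real t ≥ 1/4 and every real x with 0 < x < 1, the series S(t,x) = Σ_{k=1}^∞ (-1)^{k+1}·k·sin(kπx)·e^{-k²π²t/2} converges and satisfies 0.8·sin(πx)·e^{-π²t/2} ≤ S(t,x) ≤ 1.2·sin(πx)·e^{-π²t/2}. -/

import Mathlib

open Real

lemma abs_sin_nat_mul_le (θ : ℝ) : ∀ n : ℕ, |Real.sin (n * θ)| ≤ n * |Real.sin θ| := by
  intro n
  induction n with
  | zero => simp
  | succ n ih =>
    have h : ((n + 1 : ℕ) : ℝ) * θ = n * θ + θ := by push_cast; ring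
    rw [h, Real.sin_add]
    calc |Real.sin (n * θ) * Real.cos θ + Real.cos (n * θ) * Real.sin θ|
        ≤ |Real.sin (n * θ) * Real.cos θ| + |Real.cos (n * θ) * Real.sin θ| := abs_add_le _ _
      _ ≤ |Real.sin (n * θ)| * 1 + 1 * |Real.sin θ| := by
          rw [abs_mul, abs_mul]
          gcongr
          · exact Real.abs_cos_le_one θ
          · exact Real.abs_cos_le_one _
      _ ≤ (n : ℝ) * |Real.sin θ| + 1 * |Real.sin θ| := by
          rw [mul_one]
          gcongr
      _ = ((n + 1 : ℕ) : ℝ) * |Real.sin θ| := by push_cast; ring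

lemma succ_sq_le_four_pow : ∀ k : ℕ, ((k : ℝ) + 1) ^ 2 ≤ 4 ^ k := by
  intro k
  induction k with
  | zero => norm_num
  | succ k ih =>
    have hk : (0 : ℝ) ≤ (k : ℝ) := Nat.cast_nonneg k
    push_cast
    push_cast at ih
    calc ((k : ℝ) + 1 + 1) ^ 2 ≤ 4 * ((k : ℝ) + 1) ^ 2 := by nlinarith
      _ ≤ 4 * 4 ^ k := by nlinarith
      _ = 4 ^ (k + 1) := by ring

set_option maxHeartbeats 1000000 in
theorem stmt18 (t x : ℝ) (ht : 1/4 ≤ t) (hx0 : 0 < x) (hx1 : x < 1) :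
    Summable (fun k : ℕ =>
      (-1 : ℝ) ^ ((k + 1) + 1) * (k + 1) * Real.sin ((k + 1) * π * x) *
        Real.exp (-((k + 1 : ℝ)) ^ 2 * π ^ 2 * t / 2)) ∧
    0.8 * Real.sin (π * x) * Real.exp (-π ^ 2 * t / 2) ≤
      (∑' k : ℕ, (-1 : ℝ) ^ ((k + 1) + 1) * (k + 1) * Real.sin ((k + 1) * π * x) *
        Real.exp (-((k + 1 : ℝ)) ^ 2 * π ^ 2 * t / 2)) ∧
    (∑' k : ℕ, (-1 : ℝ) ^ ((k + 1) + 1) * (k + 1) * Real.sin ((k + 1) * π * x) *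
        Real.exp (-((k + 1 : ℝ)) ^ 2 * π ^ 2 * t / 2)) ≤
      1.2 * Real.sin (π * x) * Real.exp (-π ^ 2 * t / 2) := by
  set f : ℕ → ℝ := fun k =>
      (-1 : ℝ) ^ ((k + 1) + 1) * (k + 1) * Real.sin ((k + 1) * π * x) *
        Real.exp (-((k + 1 : ℝ)) ^ 2 * π ^ 2 * t / 2) with hf
  set c : ℝ := π ^ 2 * t / 2 with hc_def
  have hπ2 : (9.8695 : ℝ) ≤ π ^ 2 := by nlinarith [Real.pi_gt_d6]
  have hc : π ^ 2 / 8 ≤ c := by rw [hc_def]; nlinarith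
  have hcpos : (0 : ℝ) < c := by nlinarith
  set q : ℝ := Real.exp (-(3 * c)) with hq_def
  have hq0 : 0 < q := Real.exp_pos _
  have h24 : (24 : ℝ) ≤ Real.exp (3 * c) := by
    have h37 : (3.7 : ℝ) ≤ 3 * c := by nlinarith
    have h1 : Real.exp (3.7 : ℝ) = Real.exp 1 ^ (3 : ℕ) * Real.exp 0.7 := by
      rw [← Real.exp_nat_mul, ← Real.exp_add]; norm_num
    have h2 := Real.exp_one_gt_d9
    have h3 := Real.add_one_le_exp (0.7 : ℝ)
    have e3 : (2.71 : ℝ) ^ 3 ≤ Real.exp 1 ^ (3 : ℕ) :=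
      pow_le_pow_left₀ (by norm_num) (by linarith) 3
    have h4 : (24 : ℝ) ≤ Real.exp (3.7 : ℝ) := by
      rw [h1]
      calc (24 : ℝ) ≤ (2.71 : ℝ) ^ 3 * 1.7 := by norm_num
        _ ≤ Real.exp 1 ^ (3 : ℕ) * Real.exp 0.7 :=
            mul_le_mul e3 (by linarith) (by norm_num) (by positivity)
    calc (24 : ℝ) ≤ Real.exp (3.7 : ℝ) := h4
      _ ≤ Real.exp (3 * c) := Real.exp_le_exp.mpr h37
  have hq : q ≤ 1 / 24 := by
    rw [hq_def, Real.exp_neg]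
    rw [inv_le_comm₀ (Real.exp_pos _) (by norm_num)]
    simpa using h24
  set s : ℝ := Real.sin (π * x) with hs_def
  have hs : 0 < s := by
    apply Real.sin_pos_of_pos_of_lt_pi
    · positivity
    · nlinarith [Real.pi_pos]
  set E : ℝ := Real.exp (-c) with hE_def
  have hE : 0 < E := Real.exp_pos _
  have hgoalE : Real.exp (-π ^ 2 * t / 2) = E := by
    rw [hE_def]; congr 1; rw [hc_def]; ring
  -- uniform bound
  have hbound : ∀ k : ℕ, |f k| ≤ s * E * (4 * q) ^ k := by
    intro k
    have hsin : |Real.sin (((k : ℝ) + 1) * π * x)| ≤ ((k : ℝ) + 1) * s := by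
      have h := abs_sin_nat_mul_le (π * x) (k + 1)
      have harg : ((k + 1 : ℕ) : ℝ) * (π * x) = ((k : ℝ) + 1) * π * x := by push_cast; ring
      rw [harg, abs_of_pos hs] at h
      calc |Real.sin (((k : ℝ) + 1) * π * x)| ≤ ((k + 1 : ℕ) : ℝ) * s := h
        _ = ((k : ℝ) + 1) * s := by push_cast; ring
    have hexp : Real.exp (-((k : ℝ) + 1) ^ 2 * π ^ 2 * t / 2) ≤ E * q ^ k := by
      have h1 : -((k : ℝ) + 1) ^ 2 * π ^ 2 * t / 2 = -(((k : ℝ) + 1) ^ 2 * c) := by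
        rw [hc_def]; ring
      have h2 : E * q ^ k = Real.exp (-c + (k : ℝ) * (-(3 * c))) := by
        rw [hE_def, hq_def, ← Real.exp_nat_mul, ← Real.exp_add]
      rw [h1, h2]
      apply Real.exp_le_exp.mpr
      have hk : (k : ℝ) ≤ (k : ℝ) ^ 2 := by
        have := Nat.le_self_pow (two_ne_zero) k
        exact_mod_cast this
      nlinarith
    have h4pow : ((k : ℝ) + 1) ^ 2 ≤ (4 : ℝ) ^ k := succ_sq_le_four_pow k
    calc |f k| = |(-1 : ℝ) ^ ((k + 1) + 1)| * |((k : ℝ) + 1)| *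
          |Real.sin (((k : ℝ) + 1) * π * x)| * |Real.exp (-((k : ℝ) + 1) ^ 2 * π ^ 2 * t / 2)| := by
          rw [hf]; simp [abs_mul]
      _ = ((k : ℝ) + 1) * |Real.sin (((k : ℝ) + 1) * π * x)| *
          Real.exp (-((k : ℝ) + 1) ^ 2 * π ^ 2 * t / 2) := by
          rw [abs_pow, abs_neg, abs_one, one_pow, one_mul,
            abs_of_nonneg (by positivity : (0:ℝ) ≤ (k : ℝ) + 1),
            abs_of_pos (Real.exp_pos _)]
      _ ≤ ((k : ℝ) + 1) * (((k : ℝ) + 1) * s) * (E * q ^ k) := by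
          gcongr <;> first
            | exact hsin
            | exact hexp
            | positivity
      _ = ((k : ℝ) + 1) ^ 2 * (s * (E * q ^ k)) := by ring
      _ ≤ (4 : ℝ) ^ k * (s * (E * q ^ k)) := by gcongr
      _ = s * E * (4 * q) ^ k := by rw [mul_pow]; ring
  have hr1 : 4 * q < 1 := by linarith
  have hr0 : (0 : ℝ) ≤ 4 * q := by positivity
  have hgs : Summable (fun k : ℕ => s * E * (4 * q) ^ k) :=
    (summable_geometric_of_lt_one hr0 hr1).mul_left _
  have hsum : Summable f := by
    apply Summable.of_norm_bounded hgs
    intro k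
    simpa [Real.norm_eq_abs] using hbound k
  have hshift : Summable (fun k : ℕ => f (k + 1)) := (summable_nat_add_iff 1).mpr hsum
  have hT : ∑' k, f k = f 0 + ∑' k, f (k + 1) := Summable.tsum_eq_zero_add hsum
  have hf0 : f 0 = s * E := by
    have harg : -(((0 : ℕ) : ℝ) + 1) ^ 2 * π ^ 2 * t / 2 = -c := by
      rw [hc_def]; push_cast; ring
    rw [hf]
    simp only []
    rw [harg, ← hE_def, hs_def]
    norm_num
  have htail : |∑' k, f (k + 1)| ≤ 0.2 * (s * E) := by
    have hgs' : Summable (fun k : ℕ => s * E * (4 * q) ^ (k + 1)) := by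
      apply Summable.of_nonneg_of_le (fun k => by positivity) (fun k => ?_) hgs
      have hpow : (4 * q) ^ (k + 1) ≤ (4 * q) ^ k :=
        pow_le_pow_of_le_one hr0 hr1.le (Nat.le_succ k)
      exact mul_le_mul_of_nonneg_left hpow (by positivity)
    have habs : Summable (fun k : ℕ => |f (k + 1)|) := hshift.abs
    calc |∑' k, f (k + 1)| ≤ ∑' k, |f (k + 1)| := by
          simpa [Real.norm_eq_abs] using norm_tsum_le_tsum_norm
            (by simpa [Real.norm_eq_abs] using habs : Summable fun k : ℕ => ‖f (k + 1)‖)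
      _ ≤ ∑' k : ℕ, s * E * (4 * q) ^ (k + 1) :=
          Summable.tsum_le_tsum (fun k => hbound (k + 1)) habs hgs'
      _ = (s * E * (4 * q)) * ∑' k : ℕ, (4 * q) ^ k := by
          rw [← tsum_mul_left]
          congr 1; funext k; rw [pow_succ]; ring
      _ = (s * E * (4 * q)) * (1 - 4 * q)⁻¹ := by
          rw [tsum_geometric_of_lt_one hr0 hr1]
      _ ≤ 0.2 * (s * E) := by
          have h16 : 4 * q ≤ 1 / 6 := by linarith
          have hpos : (0 : ℝ) < 1 - 4 * q := by linarith
          have hinv : (1 - 4 * q)⁻¹ ≤ (5 / 6 : ℝ)⁻¹ := by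
            apply inv_anti₀ (by norm_num)
            linarith
          calc (s * E * (4 * q)) * (1 - 4 * q)⁻¹
              ≤ (s * E * (1 / 6)) * (5 / 6 : ℝ)⁻¹ := by
                apply mul_le_mul _ hinv (by positivity) (by positivity)
                gcongr
              _ = 0.2 * (s * E) := by norm_num; ring
  refine ⟨hsum, ?_, ?_⟩
  · rw [hT, hf0, hgoalE]
    have := (abs_le.mp htail).1
    linarith
  · rw [hT, hf0, hgoalE]
    have := (abs_le.mp htail).2
    linarith
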